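/- Let p > 2, r > 0, c ∈ ℝ, and set δ = r·(1 − 2/p), P = {r² + z² : z ∈ ℂ, |Im z| ≤ δ}, S = {w ∈ ℂ : Re w > 0 and |Im w| < δ}, and Ω = interior(P − c) \ {x ∈ ℝ : x ≤ r² − c}, where P − c = {w − c : w ∈ P}. Then the map g(w) = w² + r² − c is an injective holomorphic map from S onto Ω; in particular Ω is an open connected subset of ℂ, and if c > c_p := (4r²/p)·(1 − 1/p) then Ω ∩ iℝ ≠ ∅. -/

import Mathlib

private lemma sq_root_exists (w : ℂ) : ∃ z : ℂ, 0 ≤ z.re ∧ z ^ 2 = w := by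
  obtain ⟨z, hz⟩ := IsAlgClosed.exists_pow_nat_eq w (n := 2) (by norm_num)
  rcases le_or_gt 0 z.re with h | h
  · exact ⟨z, h, hz⟩
  · exact ⟨-z, by simp [h.le], by rw [neg_sq]; exact hz⟩

private lemma core_ineq_lt {δ U y : ℝ} (hδ : 0 < δ) (hx : 0 ≤ U + y ^ 2)
    (h : 4 * y ^ 2 * (U + y ^ 2) < 4 * δ ^ 2 * (U + δ ^ 2)) : y ^ 2 < δ ^ 2 := by
  by_contra hc
  push_neg at hc
  nlinarith [mul_nonneg (sub_nonneg.mpr hc) (by nlinarith : (0:ℝ) ≤ y ^ 2 + δ ^ 2 + U)]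

private lemma core_ineq_le {δ U y : ℝ} (hδ : 0 < δ) (hx : 0 ≤ U + y ^ 2)
    (h : 4 * y ^ 2 * (U + y ^ 2) ≤ 4 * δ ^ 2 * (U + δ ^ 2)) : y ^ 2 ≤ δ ^ 2 := by
  by_contra hc
  push_neg at hc
  nlinarith [mul_pos (sub_pos.mpr hc) (by nlinarith : (0:ℝ) < y ^ 2 + δ ^ 2 + U)]

set_option maxHeartbeats 1000000 in
/-- The change of variables for the rank-one case: with `δ = r(1 - 2/p)`, the map
`g(w) = w² + r² - c` is an injective holomorphic map from the strip
`S = {Re w > 0, |Im w| < δ}` onto `Ω = interior (P - c) \ {x ∈ ℝ : x ≤ r² - c}`; in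
particular `Ω` is open and connected, and if `c > c_p = (4r²/p)(1 - 1/p)` then `Ω` meets
the imaginary axis. -/
theorem rank_one_change_of_variables
    (p r c : ℝ) (hp : 2 < p) (hr : 0 < r)
    (δ : ℝ) (hδ : δ = r * (1 - 2 / p))
    (P : Set ℂ) (hP : P = {w : ℂ | ∃ z : ℂ, |z.im| ≤ δ ∧ w = (r : ℂ) ^ 2 + z ^ 2})
    (S : Set ℂ) (hS : S = {w : ℂ | 0 < w.re ∧ |w.im| < δ})
    (Ω : Set ℂ)
    (hΩ : Ω = interior ((fun w => w - (c : ℂ)) '' P) \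
        {x : ℂ | x.im = 0 ∧ x.re ≤ r ^ 2 - c})
    (g : ℂ → ℂ) (hg : g = fun w => w ^ 2 + (r : ℂ) ^ 2 - (c : ℂ)) :
    Set.InjOn g S ∧ DifferentiableOn ℂ g S ∧ g '' S = Ω ∧
      IsOpen Ω ∧ IsConnected Ω ∧
      (4 * r ^ 2 / p * (1 - 1 / p) < c →
        ∃ y : ℝ, Complex.I * (y : ℂ) ∈ Ω) := by
  have hp0 : 0 < p := by linarith
  have hδ0 : 0 < δ := by
    rw [hδ]
    have h1 : 2 / p < 1 := (div_lt_one hp0).mpr (by linarith)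
    nlinarith
  obtain ⟨a, ha⟩ : ∃ a : ℝ, a = r ^ 2 - c - δ ^ 2 := ⟨_, rfl⟩
  -- description of the translated parabolic region
  have hQ : (fun w => w - (c : ℂ)) '' P
      = {w : ℂ | w.im ^ 2 ≤ 4 * δ ^ 2 * (w.re - a)} := by
    ext w
    simp only [hP, Set.mem_image, Set.mem_setOf_eq]
    constructor
    · rintro ⟨u, ⟨z, hz, rfl⟩, rfl⟩
      have hre : ((r : ℂ) ^ 2 + z ^ 2 - (c : ℂ)).re = r ^ 2 + (z.re ^ 2 - z.im ^ 2) - c := by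
        simp [pow_two, Complex.mul_re]
      have him : ((r : ℂ) ^ 2 + z ^ 2 - (c : ℂ)).im = 2 * z.re * z.im := by
        simp [pow_two, Complex.mul_im]; ring
      rw [hre, him]
      have hz2 : z.im ^ 2 ≤ δ ^ 2 := by nlinarith [abs_nonneg z.im, sq_abs z.im]
      nlinarith [mul_nonneg (sub_nonneg.mpr hz2) (by positivity : (0:ℝ) ≤ z.re ^ 2 + δ ^ 2)]
    · intro hw
      obtain ⟨z, hz0, hz⟩ := sq_root_exists (w + (c : ℂ) - (r : ℂ) ^ 2)
      have hre : z.re ^ 2 - z.im ^ 2 = w.re + c - r ^ 2 := by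
        have := congrArg Complex.re hz
        simp [pow_two, Complex.mul_re] at this
        linarith [this]
      have him : 2 * z.re * z.im = w.im := by
        have := congrArg Complex.im hz
        simp [pow_two, Complex.mul_im] at this
        linarith
      have hU : 0 ≤ (w.re + c - r ^ 2) + z.im ^ 2 := by nlinarith [sq_nonneg z.re]
      have him2 : w.im ^ 2 = 4 * z.re ^ 2 * z.im ^ 2 := by rw [← him]; ring
      have hcore : 4 * z.im ^ 2 * ((w.re + c - r ^ 2) + z.im ^ 2)
          ≤ 4 * δ ^ 2 * ((w.re + c - r ^ 2) + δ ^ 2) := by nlinarith [hw, him2, hre]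
      have hy := core_ineq_le hδ0 hU hcore
      refine ⟨(r : ℂ) ^ 2 + z ^ 2, ⟨z, ?_, rfl⟩, ?_⟩
      · rw [abs_le]; constructor <;> nlinarith
      · rw [hz]; ring
  have hslit_closed : IsClosed {x : ℂ | x.im = 0 ∧ x.re ≤ r ^ 2 - c} := by
    refine IsClosed.inter ?_ ?_
    · exact isClosed_eq Complex.continuous_im continuous_const
    · exact isClosed_le Complex.continuous_re continuous_const
  have hQ'open : IsOpen {w : ℂ | w.im ^ 2 < 4 * δ ^ 2 * (w.re - a)} := by
    apply isOpen_lt (by fun_prop) (by fun_prop)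
  have hint : interior ((fun w => w - (c : ℂ)) '' P)
      = {w : ℂ | w.im ^ 2 < 4 * δ ^ 2 * (w.re - a)} := by
    rw [hQ]
    apply le_antisymm
    · intro w hw
      rw [mem_interior_iff_mem_nhds, Metric.mem_nhds_iff] at hw
      obtain ⟨ε, hε, hball⟩ := hw
      have hmem : w - (ε / 2 : ℝ) ∈ {w : ℂ | w.im ^ 2 ≤ 4 * δ ^ 2 * (w.re - a)} := by
        apply hball
        simp only [Metric.mem_ball, Complex.dist_eq]
        have : w - (ε / 2 : ℝ) - w = -(ε / 2 : ℝ) := by ring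
        rw [this]
        simp only [norm_neg, Complex.norm_real, Real.norm_eq_abs]
        rw [abs_of_pos (by linarith : (0:ℝ) < ε / 2)]
        linarith
      simp only [Set.mem_setOf_eq, Complex.sub_re, Complex.sub_im, Complex.ofReal_re,
        Complex.ofReal_im] at hmem
      have h4 : 4 * δ ^ 2 * (w.re - ε / 2 - a) < 4 * δ ^ 2 * (w.re - a) := by
        have := mul_lt_mul_of_pos_left
          (show w.re - ε / 2 - a < w.re - a by linarith)
          (show (0:ℝ) < 4 * δ ^ 2 by positivity)
        linarith
      show w.im ^ 2 < 4 * δ ^ 2 * (w.re - a)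
      nlinarith [hmem, h4]
    · apply interior_maximal _ hQ'open
      intro w hw
      simp only [Set.mem_setOf_eq] at hw ⊢
      exact hw.le
  have hΩ' : Ω = {w : ℂ | w.im ^ 2 < 4 * δ ^ 2 * (w.re - a)}
      \ {x : ℂ | x.im = 0 ∧ x.re ≤ r ^ 2 - c} := by rw [hΩ, hint]
  -- the image of the strip
  have himage : g '' S = Ω := by
    rw [hΩ']
    ext w
    simp only [Set.mem_image, hS, hg, Set.mem_setOf_eq, Set.mem_diff]
    constructor
    · rintro ⟨u, ⟨hu1, hu2⟩, rfl⟩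
      have hre : (u ^ 2 + (r : ℂ) ^ 2 - (c : ℂ)).re = u.re ^ 2 - u.im ^ 2 + r ^ 2 - c := by
        simp [pow_two, Complex.mul_re]
      have him : (u ^ 2 + (r : ℂ) ^ 2 - (c : ℂ)).im = 2 * u.re * u.im := by
        simp [pow_two, Complex.mul_im]; ring
      rw [hre, him]
      have hu2' : u.im ^ 2 < δ ^ 2 := by nlinarith [abs_nonneg u.im, sq_abs u.im]
      constructor
      · nlinarith [mul_pos (sub_pos.mpr hu2') (by positivity : (0:ℝ) < u.re ^ 2 + δ ^ 2)]
      · rintro ⟨h1, h2⟩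
        have h5 : (0:ℝ) < 2 * u.re := by linarith
        have : u.im = 0 := (mul_eq_zero.mp h1).resolve_left h5.ne'
        rw [this] at h2
        nlinarith
    · rintro ⟨hw1, hw2⟩
      obtain ⟨z, hz0, hz⟩ := sq_root_exists (w + (c : ℂ) - (r : ℂ) ^ 2)
      have hre : z.re ^ 2 - z.im ^ 2 = w.re + c - r ^ 2 := by
        have := congrArg Complex.re hz
        simp [pow_two, Complex.mul_re] at this
        linarith [this]
      have him : 2 * z.re * z.im = w.im := by
        have := congrArg Complex.im hz
        simp [pow_two, Complex.mul_im] at this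
        linarith
      have hU : 0 ≤ (w.re + c - r ^ 2) + z.im ^ 2 := by nlinarith [sq_nonneg z.re]
      have him2 : w.im ^ 2 = 4 * z.re ^ 2 * z.im ^ 2 := by rw [← him]; ring
      have hcore : 4 * z.im ^ 2 * ((w.re + c - r ^ 2) + z.im ^ 2)
          < 4 * δ ^ 2 * ((w.re + c - r ^ 2) + δ ^ 2) := by nlinarith [hw1, him2, hre]
      have hy := core_ineq_lt hδ0 hU hcore
      have hxpos : 0 < z.re := by
        rcases hz0.eq_or_lt with h | h
        · exfalso
          apply hw2
          constructor
          · rw [← him, ← h]; ring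
          · nlinarith [hre, sq_nonneg z.im]
        · exact h
      refine ⟨z, ⟨hxpos, ?_⟩, ?_⟩
      · rw [abs_lt]; constructor <;> nlinarith
      · rw [hz]; ring
  -- injectivity
  have hinj : Set.InjOn g S := by
    intro u hu v hv h
    rw [hg] at h
    have h2 : (u - v) * (u + v) = 0 := by linear_combination h
    rcases mul_eq_zero.mp h2 with h3 | h3
    · linear_combination h3
    · exfalso
      rw [hS] at hu hv
      have : u.re + v.re = 0 := by
        have := congrArg Complex.re h3
        simpa using this
      have h4 : (0:ℝ) < u.re := hu.1
      have h5 : (0:ℝ) < v.re := hv.1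
      linarith
  -- convexity / connectedness
  have hSconv : Convex ℝ S := by
    rw [hS]
    have : {w : ℂ | 0 < w.re ∧ |w.im| < δ}
        = {w : ℂ | 0 < w.re} ∩ ({w : ℂ | w.im < δ} ∩ {w : ℂ | -δ < w.im}) := by
      ext w
      simp only [Set.mem_setOf_eq, Set.mem_inter_iff, abs_lt]
      tauto
    rw [this]
    exact (convex_halfSpace_re_gt 0).inter
      ((convex_halfSpace_im_lt δ).inter (convex_halfSpace_im_gt (-δ)))
  have hSne : S.Nonempty := by
    refine ⟨1, ?_⟩
    rw [hS]
    simp [hδ0]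
  have hconn : IsConnected Ω := by
    rw [← himage]
    exact (hSconv.isConnected hSne).image g (by rw [hg]; fun_prop)
  have hopen : IsOpen Ω := by
    rw [hΩ']
    exact hQ'open.sdiff hslit_closed
  refine ⟨hinj, ?_, himage, hopen, hconn, ?_⟩
  · rw [hg]
    exact Differentiable.differentiableOn (by fun_prop)
  · intro hc
    have hcp : r ^ 2 - δ ^ 2 = 4 * r ^ 2 / p * (1 - 1 / p) := by
      rw [hδ]
      field_simp
      ring
    have ha0 : a < 0 := by rw [ha]; nlinarith [hcp]
    refine ⟨δ * Real.sqrt (-a), ?_⟩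
    rw [hΩ']
    have hsq : Real.sqrt (-a) ^ 2 = -a := Real.sq_sqrt (by linarith)
    have hsqpos : 0 < Real.sqrt (-a) := Real.sqrt_pos.mpr (by linarith)
    constructor
    · simp only [Set.mem_setOf_eq, Complex.mul_im, Complex.mul_re, Complex.I_re, Complex.I_im,
        Complex.ofReal_re, Complex.ofReal_im]
      ring_nf
      nlinarith [hsq, mul_pos (pow_pos hδ0 2) (neg_pos.mpr ha0)]
    · simp only [Set.mem_setOf_eq, Complex.mul_im, Complex.mul_re, Complex.I_re, Complex.I_im,
        Complex.ofReal_re, Complex.ofReal_im, not_and]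
      intro h
      exfalso
      simp at h
      rcases h with h | h
      · exact hδ0.ne' h
      · exact hsqpos.ne' h
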